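/- Let $\alpha\in(0,2)$, $h>0$, and define for $k\ge2$ even the coefficient $\beta_k^h := \frac{C_{1,\alpha}}{h^{1+\alpha}}\int_{-1}^1 (1-t^2)\,(k+t)^{-1-\alpha}\,dt$ and for $k\ge 3$ odd $\beta_k^h := \frac{C_{1,\alpha}}{2h^{1+\alpha}}\int_{-2}^2(t^2-3|t|+2)(k+t)^{-1-\alpha}\,dt$, where $C_{1,\alpha}=2^\alpha\Gamma((\alpha+1)/2)/(\pi^{1/2}|\Gamma(-\alpha/2)|)>0$. Then there exist constants $0<b_\alpha\le B_\alpha$ depending only on $\alpha$ such that $b_\alpha\,|hk|^{-1-\alpha}\le \beta_k^h\le B_\alpha\,|hk|^{-1-\alpha}$ for all $k\ge 2$. -/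

import Mathlib

open intervalIntegral Real

/-- The constant `C_{1,α} = 2^α Γ((α+1)/2) / (√π |Γ(-α/2)|)`. -/
noncomputable def C1 (α : ℝ) : ℝ :=
  2 ^ α * Real.Gamma ((α + 1) / 2) / (Real.sqrt Real.pi * |Real.Gamma (-(α / 2))|)

/-- The Huang–Oberman coefficients `β_k^h` for `k ≥ 2`. -/
noncomputable def betaCoef (α h : ℝ) (k : ℤ) : ℝ :=
  if Even k then
    C1 α / h ^ (1 + α) * ∫ t in (-1 : ℝ)..1, (1 - t ^ 2) * ((k : ℝ) + t) ^ (-(1 + α))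
  else
    C1 α / (2 * h ^ (1 + α)) *
      ∫ t in (-2 : ℝ)..2, (t ^ 2 - 3 * |t| + 2) * ((k : ℝ) + t) ^ (-(1 + α))

open MeasureTheory

lemma hb_iint (P : ℝ → ℝ) (hP : Continuous P) (c e a b : ℝ)
    (h : ∀ x ∈ Set.uIcc a b, (0:ℝ) < c + x) :
    IntervalIntegrable (fun t => P t * (c + t) ^ e) volume a b := by
  apply ContinuousOn.intervalIntegrable
  exact hP.continuousOn.mul
    (((continuous_const.add continuous_id).continuousOn).rpow_const
      fun x hx => Or.inl (h x hx).ne')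

lemma hb_iint0 (P : ℝ → ℝ) (hP : Continuous P) (e a b : ℝ)
    (h : ∀ x ∈ Set.uIcc a b, (0:ℝ) < x) :
    IntervalIntegrable (fun t => P t * t ^ e) volume a b := by
  apply ContinuousOn.intervalIntegrable
  exact hP.continuousOn.mul
    ((continuous_id.continuousOn).rpow_const fun x hx => Or.inl (h x hx).ne')

lemma hb_quad (A B C a b : ℝ) :
    ∫ t in a..b, (A*t^2 + B*t + C) =
      (A*b^3/3 + B*b^2/2 + C*b) - (A*a^3/3 + B*a^2/2 + C*a) := by
  have key : ∀ x : ℝ, HasDerivAt (fun t => A/3*t^3 + (B/2*t^2 + C*t))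
      (A*x^2 + B*x + C) x := by
    intro x
    have h1 := (hasDerivAt_pow 3 x).const_mul (A/3)
    have h2 := (hasDerivAt_pow 2 x).const_mul (B/2)
    have h3 := (hasDerivAt_id x).const_mul C
    refine (h1.add (h2.add h3)).congr_deriv ?_
    simp; ring
  rw [intervalIntegral.integral_eq_sub_of_hasDerivAt (fun x _ => key x)
    (Continuous.intervalIntegrable (by continuity) _ _)]
  ring

-- log 3 ≤ 10/9
lemma hb_log3 : Real.log 3 ≤ 10/9 := by
  rw [Real.log_le_iff_le_exp (by norm_num)]
  have h : (3:ℝ)^(9:ℕ) ≤ (Real.exp (10/9))^(9:ℕ) := by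
    rw [← Real.exp_nat_mul]
    have : (9:ℕ) * (10/9 : ℝ) = 10 := by norm_num
    rw [this]
    have h2 : (2.7182818283:ℝ)^(10:ℕ) ≤ (Real.exp 1)^(10:ℕ) :=
      pow_le_pow_left₀ (by norm_num) Real.exp_one_gt_d9.le 10
    calc (3:ℝ)^(9:ℕ) ≤ (2.7182818283:ℝ)^(10:ℕ) := by norm_num
    _ ≤ (Real.exp 1)^(10:ℕ) := h2
    _ = Real.exp 10 := by rw [← Real.exp_nat_mul]; norm_num
  exact le_of_pow_le_pow_left₀ (by norm_num) (Real.exp_pos _).le h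

-- log 5 - log 4 ≤ 9/40
lemma hb_log54 : Real.log 5 - Real.log 4 ≤ 9/40 := by
  have h54 : Real.log 5 - Real.log 4 = Real.log (5/4) := (Real.log_div (by norm_num) (by norm_num)).symm
  rw [h54, Real.log_le_iff_le_exp (by norm_num)]
  have h : ((5:ℝ)/4)^(40:ℕ) ≤ (Real.exp (9/40))^(40:ℕ) := by
    rw [← Real.exp_nat_mul]
    have : (40:ℕ) * (9/40 : ℝ) = 9 := by norm_num
    rw [this]
    have h2 : (2.7182818283:ℝ)^(9:ℕ) ≤ (Real.exp 1)^(9:ℕ) :=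
      pow_le_pow_left₀ (by norm_num) Real.exp_one_gt_d9.le 9
    calc ((5:ℝ)/4)^(40:ℕ) ≤ (2.7182818283:ℝ)^(9:ℕ) := by norm_num
    _ ≤ (Real.exp 1)^(9:ℕ) := h2
    _ = Real.exp 9 := by rw [← Real.exp_nat_mul]; norm_num
  exact le_of_pow_le_pow_left₀ (by norm_num) (Real.exp_pos _).le h

-- 18 < 25 log 5 - 32 log 2
lemma hb_log52 : (18:ℝ) < 25 * Real.log 5 - 32 * Real.log 2 := by
  have key : Real.exp 18 < (5:ℝ)^(25:ℕ) / (2:ℝ)^(32:ℕ) := by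
    have h2 : (Real.exp 1)^(18:ℕ) < (2.7182818286:ℝ)^(18:ℕ) := by
      apply pow_lt_pow_left₀ Real.exp_one_lt_d9 (Real.exp_pos _).le
      norm_num
    have h3 : Real.exp 18 = (Real.exp 1)^(18:ℕ) := by
      rw [← Real.exp_nat_mul]; norm_num
    rw [h3]
    calc ((Real.exp 1))^(18:ℕ) < (2.7182818286:ℝ)^(18:ℕ) := h2
    _ < (5:ℝ)^(25:ℕ) / (2:ℝ)^(32:ℕ) := by norm_num
  have hpos : (0:ℝ) < (5:ℝ)^(25:ℕ) / (2:ℝ)^(32:ℕ) := by positivity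
  have := (Real.lt_log_iff_exp_lt hpos).mpr key
  rw [Real.log_div (by positivity) (by positivity), Real.log_pow, Real.log_pow] at this
  push_cast at this
  linarith

lemma hb_ftc3 (p q a b : ℝ) (ha : 0 < a) (hab : a ≤ b) :
    ∫ u in a..b, (u^2 + p*u + q) * u ^ (-(3:ℝ)) =
      (Real.log b - p * b⁻¹ - q/2 * (b^2)⁻¹) - (Real.log a - p * a⁻¹ - q/2 * (a^2)⁻¹) := by
  have hpos : ∀ x ∈ Set.uIcc a b, (0:ℝ) < x := by
    intro x hx
    rw [Set.uIcc_of_le hab] at hx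
    linarith [hx.1]
  have key : ∀ x ∈ Set.uIcc a b,
      HasDerivAt (fun u => Real.log u - p * u⁻¹ - q/2 * (u^2)⁻¹)
        ((x^2 + p*x + q) * x ^ (-(3:ℝ))) x := by
    intro x hx
    have hx0 : (0:ℝ) < x := hpos x hx
    have h1 : HasDerivAt Real.log x⁻¹ x := Real.hasDerivAt_log hx0.ne'
    have h2 : HasDerivAt (fun u : ℝ => u⁻¹) (-(x^2)⁻¹) x := hasDerivAt_inv hx0.ne'
    have h3 : HasDerivAt (fun u : ℝ => (u^2)⁻¹) (-(2*x^1) / (x^2)^2) x :=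
      (hasDerivAt_pow 2 x).inv (by positivity)
    have := (h1.sub (h2.const_mul p)).sub (h3.const_mul (q/2))
    refine this.congr_deriv ?_
    have hr : x ^ (-(3:ℝ)) = (x^(3:ℕ))⁻¹ := by
      rw [show (-(3:ℝ)) = -((3:ℕ):ℝ) by norm_num, Real.rpow_neg hx0.le, Real.rpow_natCast]
    rw [hr]
    field_simp
    ring
  rw [intervalIntegral.integral_eq_sub_of_hasDerivAt key]
  exact hb_iint0 (fun u => u^2 + p*u + q) (by continuity) _ _ _ hpos

lemma hb_q1 : ∫ u in (1:ℝ)..3, (u^2 + (-3)*u + 2) * u ^ (-(3:ℝ)) = Real.log 3 - 10/9 := by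
  rw [hb_ftc3 (-3) 2 1 3 (by norm_num) (by norm_num)]
  rw [Real.log_one]
  norm_num
  ring

lemma hb_q2a : ∫ u in (3:ℝ)..4, (u^2 + (-9)*u + 20) * u ^ (-(3:ℝ)) =
    Real.log 4 - Real.log 3 - 19/72 := by
  rw [hb_ftc3 (-9) 20 3 4 (by norm_num) (by norm_num)]
  norm_num
  ring

lemma hb_q2b : ∫ u in (4:ℝ)..5, (u^2 + (-9)*u + 20) * u ^ (-(3:ℝ)) =
    Real.log 5 - Real.log 4 - 9/40 := by
  rw [hb_ftc3 (-9) 20 4 5 (by norm_num) (by norm_num)]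
  norm_num
  ring

lemma hb_contP : Continuous (fun t : ℝ => t^2 - 3*|t| + 2) := by
  exact ((continuous_pow 2).sub (continuous_const.mul continuous_abs)).add continuous_const

lemma hb_even_bounds {β : ℝ} (hβ : 0 < β) {K : ℝ} (hK : 2 ≤ K) :
    4/3 * (K+1)^(-β) ≤ (∫ t in (-1:ℝ)..1, (1 - t^2) * (K + t)^(-β)) ∧
      (∫ t in (-1:ℝ)..1, (1 - t^2) * (K + t)^(-β)) ≤ 4/3 * (K-1)^(-β) := by
  have hpos : ∀ t ∈ Set.uIcc (-1:ℝ) 1, (0:ℝ) < K + t := by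
    intro t ht
    rw [Set.uIcc_of_le (by norm_num : (-1:ℝ) ≤ 1)] at ht
    linarith [ht.1]
  have hg := hb_iint (fun t => 1 - t^2) (by continuity) K (-β) (-1) 1 hpos
  have hval : (∫ t in (-1:ℝ)..1, (1 - t^2)) = 4/3 := by
    rw [show (fun t : ℝ => 1 - t^2) = (fun t => (-1)*t^2 + 0*t + 1) from funext fun t => by ring,
      hb_quad]
    norm_num
  constructor
  · have hf : IntervalIntegrable (fun t => (1 - t^2) * (K+1)^(-β)) volume (-1) 1 :=
      Continuous.intervalIntegrable (by continuity) _ _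
    have hmono := intervalIntegral.integral_mono_on (by norm_num : (-1:ℝ) ≤ 1) hf hg ?_
    · rw [intervalIntegral.integral_mul_const, hval] at hmono
      linarith
    · intro t ht
      have h1 : (0:ℝ) < K + t := by obtain ⟨h1, h2⟩ := ht; linarith
      have h2 : (K+1)^(-β) ≤ (K+t)^(-β) :=
        Real.rpow_le_rpow_of_nonpos h1 (by obtain ⟨_, h⟩ := ht; linarith) (by linarith)
      show (1 - t^2) * (K+1)^(-β) ≤ (1 - t^2) * (K+t)^(-β)
      exact mul_le_mul_of_nonneg_left h2 (by obtain ⟨h1', h2'⟩ := ht; nlinarith)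
  · have hf : IntervalIntegrable (fun t => (1 - t^2) * (K-1)^(-β)) volume (-1) 1 :=
      Continuous.intervalIntegrable (by continuity) _ _
    have hmono := intervalIntegral.integral_mono_on (by norm_num : (-1:ℝ) ≤ 1) hg hf ?_
    · rw [intervalIntegral.integral_mul_const, hval] at hmono
      linarith
    · intro t ht
      have h0 : (0:ℝ) < K - 1 := by linarith
      have h2 : (K+t)^(-β) ≤ (K-1)^(-β) :=
        Real.rpow_le_rpow_of_nonpos h0 (by obtain ⟨h, _⟩ := ht; linarith) (by linarith)
      show (1 - t^2) * (K+t)^(-β) ≤ (1 - t^2) * (K-1)^(-β)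
      exact mul_le_mul_of_nonneg_left h2 (by obtain ⟨h1', h2'⟩ := ht; nlinarith)

lemma hb_odd_upper {β : ℝ} (hβ : 0 < β) {K : ℝ} (hK : 3 ≤ K) :
    (∫ t in (-2:ℝ)..2, (t^2 - 3*|t| + 2) * (K + t)^(-β)) ≤ 24 * (K-2)^(-β) := by
  have hpos : ∀ t ∈ Set.uIcc (-2:ℝ) 2, (0:ℝ) < K + t := by
    intro t ht
    rw [Set.uIcc_of_le (by norm_num : (-2:ℝ) ≤ 2)] at ht
    linarith [ht.1]
  have hg := hb_iint (fun t => t^2 - 3*|t| + 2) hb_contP K (-β) (-2) 2 hpos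
  have hf : IntervalIntegrable (fun _ : ℝ => 6 * (K-2)^(-β)) volume (-2) 2 :=
    intervalIntegrable_const
  have hmono := intervalIntegral.integral_mono_on (by norm_num : (-2:ℝ) ≤ 2) hg hf ?_
  · rw [intervalIntegral.integral_const] at hmono
    simp only [smul_eq_mul] at hmono
    linarith
  · intro t ht
    obtain ⟨h1, h2⟩ := ht
    have hKt : (0:ℝ) < K + t := by linarith
    have hP : t^2 - 3*|t| + 2 ≤ 6 := by nlinarith [abs_nonneg t]
    have hr : (K+t)^(-β) ≤ (K-2)^(-β) :=
      Real.rpow_le_rpow_of_nonpos (by linarith) (by linarith) (by linarith)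
    calc (t^2 - 3*|t| + 2) * (K+t)^(-β) ≤ 6 * (K+t)^(-β) :=
          mul_le_mul_of_nonneg_right hP (Real.rpow_pos_of_pos hKt _).le
    _ ≤ 6 * (K-2)^(-β) := by linarith

lemma hb_piece_low {β K : ℝ} (hβ : 0 < β) (hK : 3 ≤ K) {a b : ℝ} (ha : -2 ≤ a)
    (hab : a ≤ b) (hb2 : b ≤ 2) {c : ℝ} (hc : 0 < c)
    (pol : ℝ → ℝ) (hpol : Continuous pol)
    (habs : ∀ t ∈ Set.Icc a b, (t^2 - 3*|t| + 2) = pol t)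
    (hsign : (∀ t ∈ Set.Icc a b, pol t ≤ 0 ∧ c ≤ K + t) ∨
      (∀ t ∈ Set.Icc a b, 0 ≤ pol t ∧ K + t ≤ c)) :
    (∫ t in a..b, pol t) * c^(-β) ≤ ∫ t in a..b, (t^2 - 3*|t| + 2) * (K + t)^(-β) := by
  have hposK : ∀ t ∈ Set.uIcc a b, (0:ℝ) < K + t := by
    intro t ht
    rw [Set.uIcc_of_le hab] at ht
    have := ht.1
    linarith
  have hg := hb_iint (fun t => t^2 - 3*|t| + 2) hb_contP K (-β) a b hposK
  have hf : IntervalIntegrable (fun t => pol t * c^(-β)) volume a b :=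
    Continuous.intervalIntegrable (hpol.mul continuous_const) _ _
  have hmono := intervalIntegral.integral_mono_on hab hf hg ?_
  · rwa [intervalIntegral.integral_mul_const] at hmono
  · intro t ht
    have hKt : (0:ℝ) < K + t := by
      have h1 := ht.1; have := ht.2; linarith
    rw [← habs t ht]
    rcases hsign with hs | hs
    · obtain ⟨hp, hcc⟩ := hs t ht
      rw [habs t ht]
      have hr : (K+t)^(-β) ≤ c^(-β) :=
        Real.rpow_le_rpow_of_nonpos hc hcc (by linarith)
      calc pol t * c^(-β) ≤ pol t * (K+t)^(-β) := mul_le_mul_of_nonpos_left hr hp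
      _ = pol t * (K+t)^(-β) := rfl
    · obtain ⟨hp, hcc⟩ := hs t ht
      rw [habs t ht]
      have hr : c^(-β) ≤ (K+t)^(-β) :=
        Real.rpow_le_rpow_of_nonpos hKt hcc (by linarith)
      calc pol t * c^(-β) ≤ pol t * (K+t)^(-β) := mul_le_mul_of_nonneg_left hr hp
      _ = pol t * (K+t)^(-β) := rfl

lemma hb_odd_lower {β : ℝ} (hβ : 0 < β) {K : ℝ} (hK : 3 ≤ K) :
    3/2 * (K+1)^(-β) - 1/6 * (K-2)^(-β) ≤
      ∫ t in (-2:ℝ)..2, (t^2 - 3*|t| + 2) * (K + t)^(-β) := by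
  have hKm2 : (0:ℝ) < K - 2 := by linarith
  have hKp1 : (0:ℝ) < K + 1 := by linarith
  have hii : ∀ a b : ℝ, -2 ≤ a → a ≤ b → b ≤ 2 →
      IntervalIntegrable (fun t => (t^2 - 3*|t| + 2) * (K + t)^(-β)) volume a b := by
    intro a b ha hab hb2
    apply hb_iint (fun t => t^2 - 3*|t| + 2) hb_contP K (-β) a b
    intro t ht
    rw [Set.uIcc_of_le hab] at ht
    have := ht.1; linarith
  -- split into four pieces
  have e1 := intervalIntegral.integral_add_adjacent_intervals
    (hii (-2) (-1) (by norm_num) (by norm_num) (by norm_num))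
    (hii (-1) 0 (by norm_num) (by norm_num) (by norm_num))
  have e2 := intervalIntegral.integral_add_adjacent_intervals
    (hii 0 1 (by norm_num) (by norm_num) (by norm_num))
    (hii 1 2 (by norm_num) (by norm_num) (by norm_num))
  have e3 := intervalIntegral.integral_add_adjacent_intervals
    ((hii (-2) (-1) (by norm_num) (by norm_num) (by norm_num)).trans
      (hii (-1) 0 (by norm_num) (by norm_num) (by norm_num)))
    ((hii 0 1 (by norm_num) (by norm_num) (by norm_num)).trans
      (hii 1 2 (by norm_num) (by norm_num) (by norm_num)))
  -- piece 1 : [-2,-1]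
  have p1 := hb_piece_low hβ hK (a := -2) (b := -1) (by norm_num) (by norm_num) (by norm_num)
    hKm2 (fun t => 1*t^2 + 3*t + 2) (by fun_prop)
    (fun t ht => by rw [abs_of_nonpos (by linarith [ht.2] : t ≤ 0)]; ring)
    (Or.inl (fun t ht => ⟨show (1*t^2 + 3*t + 2 : ℝ) ≤ 0 by nlinarith [ht.1, ht.2],
      by linarith [ht.1]⟩))
  have v1 : (∫ t in (-2:ℝ)..(-1), (1*t^2 + 3*t + 2)) = -(1/6) := by
    rw [hb_quad]; norm_num
  -- piece 2 : [-1,0]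
  have p2 := hb_piece_low hβ hK (a := -1) (b := 0) (by norm_num) (by norm_num) (by norm_num)
    hKp1 (fun t => 1*t^2 + 3*t + 2) (by fun_prop)
    (fun t ht => by rw [abs_of_nonpos (ht.2 : t ≤ 0)]; ring)
    (Or.inr (fun t ht => ⟨show (0:ℝ) ≤ 1*t^2 + 3*t + 2 by nlinarith [ht.1, ht.2],
      by linarith [ht.2]⟩))
  have v2 : (∫ t in (-1:ℝ)..0, (1*t^2 + 3*t + 2)) = 5/6 := by
    rw [hb_quad]; norm_num
  -- piece 3 : [0,1]
  have p3 := hb_piece_low hβ hK (a := 0) (b := 1) (by norm_num) (by norm_num) (by norm_num)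
    hKp1 (fun t => 1*t^2 + (-3)*t + 2) (by fun_prop)
    (fun t ht => by rw [abs_of_nonneg (ht.1 : 0 ≤ t)]; ring)
    (Or.inr (fun t ht => ⟨show (0:ℝ) ≤ 1*t^2 + (-3)*t + 2 by nlinarith [ht.1, ht.2],
      by linarith [ht.2]⟩))
  have v3 : (∫ t in (0:ℝ)..1, (1*t^2 + (-3)*t + 2)) = 5/6 := by
    rw [hb_quad]; norm_num
  -- piece 4 : [1,2]
  have p4 := hb_piece_low hβ hK (a := 1) (b := 2) (by norm_num) (by norm_num) (by norm_num)
    hKp1 (fun t => 1*t^2 + (-3)*t + 2) (by fun_prop)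
    (fun t ht => by rw [abs_of_nonneg (by linarith [ht.1] : 0 ≤ t)]; ring)
    (Or.inl (fun t ht => ⟨show (1*t^2 + (-3)*t + 2 : ℝ) ≤ 0 by nlinarith [ht.1, ht.2],
      by linarith [ht.1]⟩))
  have v4 : (∫ t in (1:ℝ)..2, (1*t^2 + (-3)*t + 2)) = -(1/6) := by
    rw [hb_quad]; norm_num
  rw [v1] at p1; rw [v2] at p2; rw [v3] at p3; rw [v4] at p4
  linarith

lemma hb_cmp {P A X C : ℝ} (hA : 0 ≤ A) (h : (P ≤ 0 ∧ X ≤ C) ∨ (0 ≤ P ∧ C ≤ X)) :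
    C * (P * A) ≤ P * (A * X) := by
  rcases h with ⟨hP, hXC⟩ | ⟨hP, hCX⟩
  · have hPA : P * A ≤ 0 := by nlinarith
    calc C * (P * A) = (P * A) * C := by ring
    _ ≤ (P * A) * X := mul_le_mul_of_nonpos_left hXC hPA
    _ = P * (A * X) := by ring
  · have hPA : 0 ≤ P * A := mul_nonneg hP hA
    calc C * (P * A) = (P * A) * C := by ring
    _ ≤ (P * A) * X := mul_le_mul_of_nonneg_left hCX hPA
    _ = P * (A * X) := by ring

lemma hb_M_pos : (0:ℝ) < Real.log 4 + 25/9*(Real.log 5 - Real.log 4) - 2 := by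
  have h4 : Real.log 4 = 2 * Real.log 2 := by
    rw [show (4:ℝ) = 2^(2:ℕ) by norm_num, Real.log_pow]; push_cast; ring
  have := hb_log52
  rw [h4]; linarith

lemma hb_cmp_int {α : ℝ} (h0 : 0 < α) (h2 : α < 2) (p q a b cr : ℝ)
    (ha : 1 ≤ a) (hab : a ≤ b) (hcr : 0 < cr)
    (hsign : ∀ u ∈ Set.Icc a b, (u^2 + p*u + q ≤ 0 ∧ u^(2-α) ≤ cr^(2-α)) ∨
      (0 ≤ u^2 + p*u + q ∧ cr^(2-α) ≤ u^(2-α))) :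
    cr^(2-α) * ∫ u in a..b, (u^2 + p*u + q) * u^(-(3:ℝ)) ≤
      ∫ u in a..b, (u^2 + p*u + q) * u^(-(1+α)) := by
  have hpos : ∀ u ∈ Set.uIcc a b, (0:ℝ) < u := by
    intro u hu
    rw [Set.uIcc_of_le hab] at hu
    linarith [hu.1]
  have hg := hb_iint0 (fun u => u^2 + p*u + q) (by fun_prop) (-(1+α)) a b hpos
  have hf' := hb_iint0 (fun u => u^2 + p*u + q) (by fun_prop) (-(3:ℝ)) a b hpos
  have hf : IntervalIntegrable
      (fun u => cr^(2-α) * ((u^2 + p*u + q) * u^(-(3:ℝ)))) volume a b :=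
    hf'.const_mul _
  have hmono := intervalIntegral.integral_mono_on hab hf hg ?_
  · rwa [intervalIntegral.integral_const_mul] at hmono
  · intro u hu
    have hu0 : (0:ℝ) < u := by linarith [hu.1]
    have hexp : u^(-(1+α)) = u^(-(3:ℝ)) * u^(2-α) := by
      rw [← Real.rpow_add hu0]
      congr 1
      ring
    show cr^(2-α) * ((u^2 + p*u + q) * u^(-(3:ℝ))) ≤ (u^2 + p*u + q) * u^(-(1+α))
    rw [hexp]
    exact hb_cmp (Real.rpow_pos_of_pos hu0 _).le (hsign u hu)

lemma hb_J3 {α : ℝ} (h0 : 0 < α) (h2 : α < 2) :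
    3^(2-α) * (Real.log 4 + 25/9*(Real.log 5 - Real.log 4) - 2) ≤
      ∫ t in (-2:ℝ)..2, (t^2 - 3*|t| + 2) * ((3:ℝ) + t)^(-(1+α)) := by
  have hγ : (0:ℝ) ≤ 2-α := by linarith
  have hii : ∀ a b : ℝ, -2 ≤ a → a ≤ b → b ≤ 2 →
      IntervalIntegrable (fun t => (t^2 - 3*|t| + 2) * ((3:ℝ) + t)^(-(1+α))) volume a b := by
    intro a b ha hab hb2
    apply hb_iint (fun t => t^2 - 3*|t| + 2) hb_contP 3 (-(1+α)) a b
    intro t ht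
    rw [Set.uIcc_of_le hab] at ht
    have := ht.1; linarith
  have hsplit := intervalIntegral.integral_add_adjacent_intervals
    (hii (-2) 0 (by norm_num) (by norm_num) (by norm_num))
    (hii 0 2 (by norm_num) (by norm_num) (by norm_num))
  -- first piece becomes ∫_1^3
  have hS1 : (∫ t in (-2:ℝ)..0, (t^2 - 3*|t| + 2) * ((3:ℝ) + t)^(-(1+α))) =
      ∫ u in (1:ℝ)..3, (u^2 + (-3)*u + 2) * u^(-(1+α)) := by
    rw [intervalIntegral.integral_congr
      (g := fun t => (fun u => (u^2 + (-3)*u + 2) * u^(-(1+α))) (t + 3)) ?_]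
    · rw [intervalIntegral.integral_comp_add_right
        (fun u => (u^2 + (-3)*u + 2) * u^(-(1+α))) 3]
      norm_num
    · intro t ht
      rw [Set.uIcc_of_le (by norm_num : (-2:ℝ) ≤ 0)] at ht
      show (t^2 - 3*|t| + 2) * ((3:ℝ) + t)^(-(1+α)) =
        ((t+3)^2 + (-3)*(t+3) + 2) * (t+3)^(-(1+α))
      rw [abs_of_nonpos ht.2, show (3:ℝ) + t = t + 3 from add_comm 3 t]
      congr 1
      ring
  -- second piece becomes ∫_3^5
  have hS2 : (∫ t in (0:ℝ)..2, (t^2 - 3*|t| + 2) * ((3:ℝ) + t)^(-(1+α))) =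
      ∫ u in (3:ℝ)..5, (u^2 + (-9)*u + 20) * u^(-(1+α)) := by
    rw [intervalIntegral.integral_congr
      (g := fun t => (fun u => (u^2 + (-9)*u + 20) * u^(-(1+α))) (t + 3)) ?_]
    · rw [intervalIntegral.integral_comp_add_right
        (fun u => (u^2 + (-9)*u + 20) * u^(-(1+α))) 3]
      norm_num
    · intro t ht
      rw [Set.uIcc_of_le (by norm_num : (0:ℝ) ≤ 2)] at ht
      show (t^2 - 3*|t| + 2) * ((3:ℝ) + t)^(-(1+α)) =
        ((t+3)^2 + (-9)*(t+3) + 20) * (t+3)^(-(1+α))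
      rw [abs_of_nonneg ht.1, show (3:ℝ) + t = t + 3 from add_comm 3 t]
      congr 1
      ring
  -- split ∫_3^5 at 4
  have hposu : ∀ a b : ℝ, 1 ≤ a → a ≤ b → ∀ u ∈ Set.uIcc a b, (0:ℝ) < u := by
    intro a b ha hab u hu
    rw [Set.uIcc_of_le hab] at hu
    linarith [hu.1]
  have hsplit2 := intervalIntegral.integral_add_adjacent_intervals
    (hb_iint0 (fun u => u^2 + (-9)*u + 20) (by fun_prop) (-(1+α)) 3 4
      (hposu 3 4 (by norm_num) (by norm_num)))
    (hb_iint0 (fun u => u^2 + (-9)*u + 20) (by fun_prop) (-(1+α)) 4 5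
      (hposu 4 5 (by norm_num) (by norm_num)))
  -- three comparisons
  have c1 := hb_cmp_int h0 h2 (-3) 2 1 3 2 (by norm_num) (by norm_num) (by norm_num) ?s1
  have c2 := hb_cmp_int h0 h2 (-9) 20 3 4 3 (by norm_num) (by norm_num) (by norm_num) ?s2
  have c3 := hb_cmp_int h0 h2 (-9) 20 4 5 5 (by norm_num) (by norm_num) (by norm_num) ?s3
  case s1 =>
    intro u hu
    rcases le_total u 2 with h | h
    · exact Or.inl ⟨by nlinarith [hu.1], Real.rpow_le_rpow (by linarith [hu.1]) h hγ⟩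
    · exact Or.inr ⟨by nlinarith [hu.2], Real.rpow_le_rpow (by norm_num) h hγ⟩
  case s2 =>
    intro u hu
    exact Or.inr ⟨by nlinarith [hu.1, hu.2], Real.rpow_le_rpow (by norm_num) hu.1 hγ⟩
  case s3 =>
    intro u hu
    exact Or.inl ⟨by nlinarith [hu.1, hu.2], Real.rpow_le_rpow (by linarith [hu.1]) hu.2 hγ⟩
  rw [hb_q1] at c1
  rw [hb_q2a] at c2
  rw [hb_q2b] at c3
  -- combine
  have hQ1neg : Real.log 3 - 10/9 ≤ 0 := by linarith [hb_log3]
  have hQ2bneg : Real.log 5 - Real.log 4 - 9/40 ≤ 0 := by linarith [hb_log54]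
  have h23 : (2:ℝ)^(2-α) ≤ 3^(2-α) := Real.rpow_le_rpow (by norm_num) (by norm_num) hγ
  have h53 : (5:ℝ)^(2-α) ≤ 25/9 * 3^(2-α) := by
    have he : (5:ℝ)^(2-α) = (5/3)^(2-α) * 3^(2-α) := by
      rw [← Real.mul_rpow (by norm_num) (by norm_num)]
      norm_num
    rw [he]
    have h1 : ((5:ℝ)/3)^(2-α) ≤ (5/3)^(2:ℝ) :=
      Real.rpow_le_rpow_of_exponent_le (by norm_num) (by linarith)
    have h2' : ((5:ℝ)/3)^(2:ℝ) = 25/9 := by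
      rw [show (2:ℝ) = ((2:ℕ):ℝ) by norm_num, Real.rpow_natCast]
      norm_num
    have h3 : (0:ℝ) < 3^(2-α) := Real.rpow_pos_of_pos (by norm_num) _
    nlinarith
  have t1 : 3^(2-α) * (Real.log 3 - 10/9) ≤ 2^(2-α) * (Real.log 3 - 10/9) :=
    mul_le_mul_of_nonpos_right h23 hQ1neg
  have t2 : 25/9 * 3^(2-α) * (Real.log 5 - Real.log 4 - 9/40) ≤
      5^(2-α) * (Real.log 5 - Real.log 4 - 9/40) :=
    mul_le_mul_of_nonpos_right h53 hQ2bneg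
  have hexpand : 3^(2-α) * (Real.log 4 + 25/9*(Real.log 5 - Real.log 4) - 2) =
      3^(2-α) * (Real.log 3 - 10/9) + 3^(2-α) * (Real.log 4 - Real.log 3 - 19/72)
        + 25/9 * 3^(2-α) * (Real.log 5 - Real.log 4 - 9/40) := by ring
  linarith

lemma hb_C1_pos {α : ℝ} (h0 : 0 < α) (h2 : α < 2) : 0 < C1 α := by
  unfold C1
  apply div_pos
  · exact mul_pos (Real.rpow_pos_of_pos (by norm_num) _)
      (Real.Gamma_pos_of_pos (by linarith))
  · apply mul_pos (Real.sqrt_pos.mpr Real.pi_pos)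
    rw [abs_pos]
    apply Real.Gamma_ne_zero
    intro m hm
    have hm' : (m:ℝ) = α/2 := by linarith
    rcases Nat.eq_zero_or_pos m with h | h
    · rw [h] at hm'; norm_num at hm'; linarith
    · have : (1:ℝ) ≤ (m:ℝ) := by exact_mod_cast h
      linarith

set_option maxHeartbeats 1000000 in
/-- two-sided bounds `b_α |hk|^{-1-α} ≤ β_k^h ≤ B_α |hk|^{-1-α}` for `k ≥ 2`,
with constants depending only on `α`. -/
theorem stmt9 (α : ℝ) (hα0 : 0 < α) (hα2 : α < 2) :
    ∃ b B : ℝ, 0 < b ∧ b ≤ B ∧ ∀ h : ℝ, 0 < h → ∀ k : ℤ, 2 ≤ k →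
      b * |h * (k : ℝ)| ^ (-(1 + α)) ≤ betaCoef α h k ∧
        betaCoef α h k ≤ B * |h * (k : ℝ)| ^ (-(1 + α)) := by
  have hC1 := hb_C1_pos hα0 hα2
  have hβ : (0:ℝ) < 1 + α := by linarith
  have hM := hb_M_pos
  have h3γpos : (0:ℝ) < (3:ℝ)^(2-α) := Real.rpow_pos_of_pos (by norm_num) _
  have h2negpos : (0:ℝ) < (2:ℝ)^(-(1+α)) := Real.rpow_pos_of_pos (by norm_num) _
  have h2pospos : (0:ℝ) < (2:ℝ)^(1+α) := Real.rpow_pos_of_pos (by norm_num) _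
  have h3pospos : (0:ℝ) < (3:ℝ)^(1+α) := Real.rpow_pos_of_pos (by norm_num) _
  have h2le : (2:ℝ)^(-(1+α)) ≤ 2^(1+α) :=
    Real.rpow_le_rpow_of_exponent_le (by norm_num) (by linarith)
  have h2le8 : (2:ℝ)^(1+α) ≤ 8 := by
    have h1 : (2:ℝ)^(1+α) ≤ 2^(3:ℝ) :=
      Real.rpow_le_rpow_of_exponent_le (by norm_num) (by linarith)
    have h2' : (2:ℝ)^(3:ℝ) = 8 := by
      rw [show (3:ℝ) = ((3:ℕ):ℝ) by norm_num, Real.rpow_natCast]; norm_num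
    linarith
  set M : ℝ := Real.log 4 + 25/9*(Real.log 5 - Real.log 4) - 2 with hMdef
  set b1 : ℝ := C1 α * (4/3) * 2^(-(1+α)) with hb1
  set b2 : ℝ := C1 α * 2^(-(1+α)) / 12 with hb2
  set b3 : ℝ := C1 α / 2 * ((3:ℝ)^(2-α) * M) * 3^(1+α) with hb3
  set B1 : ℝ := C1 α * (4/3) * 2^(1+α) with hB1
  set B2 : ℝ := 12 * C1 α * 3^(1+α) with hB2
  have hb1p : 0 < b1 := by rw [hb1]; positivity
  have hb2p : 0 < b2 := by rw [hb2]; positivity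
  have hb3p : 0 < b3 := by
    rw [hb3]
    have : 0 < (3:ℝ)^(2-α) * M := mul_pos h3γpos hM
    positivity
  have hB1p : 0 < B1 := by rw [hB1]; positivity
  refine ⟨min b1 (min b2 b3), max B1 B2, lt_min hb1p (lt_min hb2p hb3p), ?_, ?_⟩
  · refine le_trans (min_le_left _ _) (le_trans ?_ (le_max_left _ _))
    rw [hb1, hB1]
    nlinarith
  · intro h hh k hk
    have hk2 : (2:ℝ) ≤ (k:ℝ) := by exact_mod_cast hk
    have hkpos : (0:ℝ) < (k:ℝ) := by linarith
    have habs : |h * (k:ℝ)| = h * (k:ℝ) := abs_of_pos (mul_pos hh hkpos)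
    have hmulr : (h * (k:ℝ))^(-(1+α)) = h^(-(1+α)) * (k:ℝ)^(-(1+α)) :=
      Real.mul_rpow hh.le hkpos.le
    have hhpos : (0:ℝ) < h^(-(1+α)) := Real.rpow_pos_of_pos hh _
    have hkneg : (0:ℝ) < (k:ℝ)^(-(1+α)) := Real.rpow_pos_of_pos hkpos _
    have hXpos : (0:ℝ) < h^(-(1+α)) * (k:ℝ)^(-(1+α)) := mul_pos hhpos hkneg
    have hhinv : C1 α / h^(1+α) = C1 α * h^(-(1+α)) := by
      rw [Real.rpow_neg hh.le]; ring
    have h2hinv : C1 α / (2 * h^(1+α)) = C1 α / 2 * h^(-(1+α)) := by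
      rw [Real.rpow_neg hh.le]; ring
    have hminb1 : min b1 (min b2 b3) ≤ b1 := min_le_left _ _
    have hminb2 : min b1 (min b2 b3) ≤ b2 := le_trans (min_le_right _ _) (min_le_left _ _)
    have hminb3 : min b1 (min b2 b3) ≤ b3 := le_trans (min_le_right _ _) (min_le_right _ _)
    rw [betaCoef, habs, hmulr]
    split_ifs with hev
    · -- even case
      obtain ⟨hl, hu⟩ := hb_even_bounds hβ hk2
      have hlow2 : 2^(-(1+α)) * (k:ℝ)^(-(1+α)) ≤ ((k:ℝ)+1)^(-(1+α)) := by
        rw [← Real.mul_rpow (by norm_num) hkpos.le]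
        exact Real.rpow_le_rpow_of_nonpos (by linarith) (by linarith) (by linarith)
      have hup2 : ((k:ℝ)-1)^(-(1+α)) ≤ 2^(1+α) * (k:ℝ)^(-(1+α)) := by
        have h1 : ((k:ℝ)/2) ≤ (k:ℝ)-1 := by linarith
        have h2' : ((k:ℝ)-1)^(-(1+α)) ≤ ((k:ℝ)/2)^(-(1+α)) :=
          Real.rpow_le_rpow_of_nonpos (by linarith) h1 (by linarith)
        have h3' : ((k:ℝ)/2)^(-(1+α)) = (k:ℝ)^(-(1+α)) * 2^(1+α) := by
          rw [div_eq_mul_inv, Real.mul_rpow hkpos.le (by norm_num),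
            Real.inv_rpow (by norm_num : (0:ℝ) ≤ 2), Real.rpow_neg (by norm_num : (0:ℝ) ≤ 2),
            inv_inv]
        linarith
      constructor
      · calc min b1 (min b2 b3) * (h^(-(1+α)) * (k:ℝ)^(-(1+α)))
            ≤ b1 * (h^(-(1+α)) * (k:ℝ)^(-(1+α))) :=
              mul_le_mul_of_nonneg_right hminb1 hXpos.le
        _ = (C1 α * h^(-(1+α))) * (4/3 * (2^(-(1+α)) * (k:ℝ)^(-(1+α)))) := by
              rw [hb1]; ring
        _ ≤ (C1 α * h^(-(1+α))) * (4/3 * ((k:ℝ)+1)^(-(1+α))) := by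
              apply mul_le_mul_of_nonneg_left (by linarith) (by positivity)
        _ ≤ (C1 α * h^(-(1+α))) * ∫ t in (-1:ℝ)..1, (1 - t^2) * ((k:ℝ) + t)^(-(1+α)) :=
              mul_le_mul_of_nonneg_left hl (by positivity)
        _ = C1 α / h^(1+α) * ∫ t in (-1:ℝ)..1, (1 - t^2) * ((k:ℝ) + t)^(-(1+α)) := by
              rw [hhinv]
      · calc C1 α / h^(1+α) * ∫ t in (-1:ℝ)..1, (1 - t^2) * ((k:ℝ) + t)^(-(1+α))
            = (C1 α * h^(-(1+α))) * ∫ t in (-1:ℝ)..1, (1 - t^2) * ((k:ℝ) + t)^(-(1+α)) := by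
              rw [hhinv]
        _ ≤ (C1 α * h^(-(1+α))) * (4/3 * ((k:ℝ)-1)^(-(1+α))) :=
              mul_le_mul_of_nonneg_left hu (by positivity)
        _ ≤ (C1 α * h^(-(1+α))) * (4/3 * (2^(1+α) * (k:ℝ)^(-(1+α)))) := by
              apply mul_le_mul_of_nonneg_left (by linarith) (by positivity)
        _ = B1 * (h^(-(1+α)) * (k:ℝ)^(-(1+α))) := by rw [hB1]; ring
        _ ≤ max B1 B2 * (h^(-(1+α)) * (k:ℝ)^(-(1+α))) :=
              mul_le_mul_of_nonneg_right (le_max_left _ _) hXpos.le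
    · -- odd case
      have hodd : Odd k := Int.not_even_iff_odd.mp hev
      have hk3 : 3 ≤ k := by rcases hodd with ⟨m, hm⟩; omega
      have hk3R : (3:ℝ) ≤ (k:ℝ) := by exact_mod_cast hk3
      constructor
      · by_cases hk5 : k = 3
        · subst hk5
          have hcast : ((3:ℤ):ℝ) = (3:ℝ) := by norm_num
          rw [hcast]
          have hJ3 := hb_J3 hα0 hα2
          have h33 : (3:ℝ)^(1+α) * (3:ℝ)^(-(1+α)) = 1 := by
            rw [← Real.rpow_add (by norm_num : (0:ℝ) < 3),
              show (1 + α + -(1 + α) : ℝ) = 0 by ring, Real.rpow_zero]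
          calc min b1 (min b2 b3) * (h^(-(1+α)) * (3:ℝ)^(-(1+α)))
              ≤ b3 * (h^(-(1+α)) * (3:ℝ)^(-(1+α))) :=
                mul_le_mul_of_nonneg_right hminb3 (by positivity)
          _ = (C1 α / 2 * h^(-(1+α))) * ((3:ℝ)^(2-α) * M) *
                ((3:ℝ)^(1+α) * (3:ℝ)^(-(1+α))) := by rw [hb3]; ring
          _ = (C1 α / 2 * h^(-(1+α))) * ((3:ℝ)^(2-α) * M) := by rw [h33, mul_one]
          _ ≤ (C1 α / 2 * h^(-(1+α))) *
                ∫ t in (-2:ℝ)..2, (t^2 - 3*|t| + 2) * ((3:ℝ) + t)^(-(1+α)) :=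
                mul_le_mul_of_nonneg_left hJ3 (by positivity)
          _ = C1 α / (2 * h^(1+α)) *
                ∫ t in (-2:ℝ)..2, (t^2 - 3*|t| + 2) * ((3:ℝ) + t)^(-(1+α)) := by
                rw [h2hinv]
        · have hk5' : 5 ≤ k := by rcases hodd with ⟨m, hm⟩; omega
          have hk5R : (5:ℝ) ≤ (k:ℝ) := by exact_mod_cast hk5'
          have hlo := hb_odd_lower hβ hk3R
          have hkp1pos : (0:ℝ) < ((k:ℝ)+1)^(-(1+α)) :=
            Real.rpow_pos_of_pos (by linarith) _
          have hcomb : 1/6 * ((k:ℝ)+1)^(-(1+α)) ≤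
              3/2 * ((k:ℝ)+1)^(-(1+α)) - 1/6 * ((k:ℝ)-2)^(-(1+α)) := by
            have h1 : ((k:ℝ)+1)/2 ≤ (k:ℝ)-2 := by linarith
            have h2' : ((k:ℝ)-2)^(-(1+α)) ≤ (((k:ℝ)+1)/2)^(-(1+α)) :=
              Real.rpow_le_rpow_of_nonpos (by linarith) h1 (by linarith)
            have h3' : (((k:ℝ)+1)/2)^(-(1+α)) = ((k:ℝ)+1)^(-(1+α)) * 2^(1+α) := by
              rw [div_eq_mul_inv, Real.mul_rpow (by linarith : (0:ℝ) ≤ (k:ℝ)+1) (by norm_num),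
                Real.inv_rpow (by norm_num : (0:ℝ) ≤ 2),
                Real.rpow_neg (by norm_num : (0:ℝ) ≤ 2), inv_inv]
            nlinarith
          have hlow2 : 2^(-(1+α)) * (k:ℝ)^(-(1+α)) ≤ ((k:ℝ)+1)^(-(1+α)) := by
            rw [← Real.mul_rpow (by norm_num) hkpos.le]
            exact Real.rpow_le_rpow_of_nonpos (by linarith) (by linarith) (by linarith)
          calc min b1 (min b2 b3) * (h^(-(1+α)) * (k:ℝ)^(-(1+α)))
              ≤ b2 * (h^(-(1+α)) * (k:ℝ)^(-(1+α))) :=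
                mul_le_mul_of_nonneg_right hminb2 hXpos.le
          _ = (C1 α / 2 * h^(-(1+α))) * (1/6 * (2^(-(1+α)) * (k:ℝ)^(-(1+α)))) := by
                rw [hb2]; ring
          _ ≤ (C1 α / 2 * h^(-(1+α))) * (1/6 * ((k:ℝ)+1)^(-(1+α))) := by
                apply mul_le_mul_of_nonneg_left (by linarith) (by positivity)
          _ ≤ (C1 α / 2 * h^(-(1+α))) *
                (3/2 * ((k:ℝ)+1)^(-(1+α)) - 1/6 * ((k:ℝ)-2)^(-(1+α))) := by
                apply mul_le_mul_of_nonneg_left hcomb (by positivity)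
          _ ≤ (C1 α / 2 * h^(-(1+α))) *
                ∫ t in (-2:ℝ)..2, (t^2 - 3*|t| + 2) * ((k:ℝ) + t)^(-(1+α)) :=
                mul_le_mul_of_nonneg_left hlo (by positivity)
          _ = C1 α / (2 * h^(1+α)) *
                ∫ t in (-2:ℝ)..2, (t^2 - 3*|t| + 2) * ((k:ℝ) + t)^(-(1+α)) := by
                rw [h2hinv]
      · have hup := hb_odd_upper hβ hk3R
        have hup2 : ((k:ℝ)-2)^(-(1+α)) ≤ 3^(1+α) * (k:ℝ)^(-(1+α)) := by
          have h1 : ((k:ℝ)/3) ≤ (k:ℝ)-2 := by linarith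
          have h2' : ((k:ℝ)-2)^(-(1+α)) ≤ ((k:ℝ)/3)^(-(1+α)) :=
            Real.rpow_le_rpow_of_nonpos (by nlinarith) h1 (by linarith)
          have h3' : ((k:ℝ)/3)^(-(1+α)) = (k:ℝ)^(-(1+α)) * 3^(1+α) := by
            rw [div_eq_mul_inv, Real.mul_rpow hkpos.le (by norm_num),
              Real.inv_rpow (by norm_num : (0:ℝ) ≤ 3),
              Real.rpow_neg (by norm_num : (0:ℝ) ≤ 3), inv_inv]
          linarith
        calc C1 α / (2 * h^(1+α)) *
              ∫ t in (-2:ℝ)..2, (t^2 - 3*|t| + 2) * ((k:ℝ) + t)^(-(1+α))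
            = (C1 α / 2 * h^(-(1+α))) *
              ∫ t in (-2:ℝ)..2, (t^2 - 3*|t| + 2) * ((k:ℝ) + t)^(-(1+α)) := by rw [h2hinv]
        _ ≤ (C1 α / 2 * h^(-(1+α))) * (24 * ((k:ℝ)-2)^(-(1+α))) :=
              mul_le_mul_of_nonneg_left hup (by positivity)
        _ ≤ (C1 α / 2 * h^(-(1+α))) * (24 * (3^(1+α) * (k:ℝ)^(-(1+α)))) := by
              apply mul_le_mul_of_nonneg_left (by nlinarith) (by positivity)
        _ = B2 * (h^(-(1+α)) * (k:ℝ)^(-(1+α))) := by rw [hB2]; ring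
        _ ≤ max B1 B2 * (h^(-(1+α)) * (k:ℝ)^(-(1+α))) :=
              mul_le_mul_of_nonneg_right (le_max_right _ _) hXpos.le
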